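/- (Lemma 6) Let X^n ⊂ ℝ^d (d ≥ 2), let u_ℓ ∈ S^{d−1}, let x ∈ M(X_{u_ℓ}^n) be a maximum-depth point of the projected sample, and let ℓ = {A_{u_ℓ} x + δ u_ℓ : δ ∈ ℝ}. Let y ∈ ℓ \ cov(X^n), let Y^m consist of m repetitions of y, and let z be the intersection point of ℓ with the boundary of cov(X^n) closer to y (so the open segment between z and y is disjoint from cov(X^n)). Then D(z, X^n ∪ Y^m) ≥ min{n·λ*(X_{u_ℓ}^n), m + 1} / (n + m). -/

import Mathlib

open scoped RealInnerProductSpace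
open MeasureTheory

noncomputable section

/-- `E d` is the Euclidean space `ℝ^d`. -/
abbrev E (d : ℕ) : Type := EuclideanSpace ℝ (Fin d)

/-- A sample `X` of `n` points in `ℝ^d` is in general position if no affine hyperplane
(encoded as `{x | ⟪v, x⟫ = c}` for some `v ≠ 0`) contains more than `d` of the points. -/
def inGeneralPosition {d n : ℕ} (X : Fin n → E d) : Prop :=
  ∀ v : E d, v ≠ 0 → ∀ c : ℝ, ({i : Fin n | ⟪v, X i⟫ = c} : Set (Fin n)).ncard ≤ d

/-- Number of sample points in the closed halfspace `{z | ⟪u, z⟫ ≤ ⟪u, x⟫}`. -/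
def sideCount {d n : ℕ} (X : Fin n → E d) (u x : E d) : ℕ :=
  ({i : Fin n | ⟪u, X i⟫ ≤ ⟪u, x⟫} : Set (Fin n)).ncard

/-- Tukey's halfspace depth of `x` with respect to the sample `X`. -/
def depth {d n : ℕ} (X : Fin n → E d) (x : E d) : ℝ :=
  sInf {r : ℝ | ∃ u : E d, ‖u‖ = 1 ∧ r = (sideCount X u x : ℝ) / (n : ℝ)}

/-- The maximum Tukey depth `λ*` of the sample `X`. -/
def maxDepth {d n : ℕ} (X : Fin n → E d) : ℝ :=
  sSup (Set.range (depth X))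

/-- The set `M(X)` of deepest points. -/
def MSet {d n : ℕ} (X : Fin n → E d) : Set (E d) :=
  {x | depth X x = maxDepth X}

/-- `U_x`: the set of optimal (unit) directions realizing the depth at `x`. -/
def USet {d n : ℕ} (X : Fin n → E d) (x : E d) : Set (E d) :=
  {u | ‖u‖ = 1 ∧ (sideCount X u x : ℝ) / (n : ℝ) = depth X x}

/-- `H_{x,y}`: the open hemisphere of unit directions `u` with `⟪u, x⟫ < ⟪u, y⟫`. -/
def HSet {d : ℕ} (x y : E d) : Set (E d) :=
  {u | ‖u‖ = 1 ∧ ⟪u, x⟫ < ⟪u, y⟫}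

/-- `B_z`. -/
def BSet {d n : ℕ} (X : Fin n → E d) (z : E d) : Set (E d) :=
  {x | x ∈ MSet X ∧ USet X x ∩ HSet x z = ∅}

/-- `B̃_z = B_z \ {z}`. -/
def BTilde {d n : ℕ} (X : Fin n → E d) (z : E d) : Set (E d) :=
  BSet X z \ {z}

/-- `v` is a unit vector normal to an affine hyperplane spanned by `d` of the sample points. -/
def normalToSampleHyperplane {d n : ℕ} (X : Fin n → E d) (v : E d) : Prop :=
  ‖v‖ = 1 ∧ ∃ (s : Finset (Fin n)) (c : ℝ), s.card = d ∧
    (affineSpan ℝ (X '' (s : Set (Fin n))) : Set (E d)) = {x : E d | ⟪v, x⟫ = c}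

/-- Condition (2.1) on a unit direction `u`. -/
def cond21 {d n : ℕ} (X : Fin n → E d) (u : E d) : Prop :=
  ∀ v : E d, normalToSampleHyperplane X v → ⟪u, v⟫ ≠ 0

/-- `A` represents the columns of a `d × (d-1)` matrix which together with the unit
vector `u` form an orthonormal basis of `ℝ^d`. -/
def IsAu {d : ℕ} (u : E d) (A : Fin (d - 1) → E d) : Prop :=
  ‖u‖ = 1 ∧ Orthonormal ℝ A ∧ ∀ j, ⟪A j, u⟫ = 0

/-- The `A_u`-projection `A_u^T x ∈ ℝ^{d-1}` of a point `x ∈ ℝ^d`. -/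
def proj {d : ℕ} (A : Fin (d - 1) → E d) (x : E d) : E (d - 1) :=
  (WithLp.equiv 2 (Fin (d - 1) → ℝ)).symm (fun j => ⟪A j, x⟫)

/-- The embedding `A_u x = ∑ j x_j A_j ∈ ℝ^d` of a point `x ∈ ℝ^{d-1}`. -/
def embed {d : ℕ} (A : Fin (d - 1) → E d) (x : E (d - 1)) : E d :=
  ∑ j, x j • A j

/-- `λ₀ = inf_{u ∈ S^{d-1}} λ*(X_u^n)`, the infimum over all directions of the maximum
Tukey depth of the projected sample. -/
def lambda0 {d n : ℕ} (X : Fin n → E d) : ℝ :=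
  sInf {r : ℝ | ∃ (u : E d) (A : Fin (d - 1) → E d),
    IsAu u A ∧ r = maxDepth (fun i => proj A (X i))}

/-- The average (barycenter) of a set `K ⊆ ℝ^d`, taken with respect to the Hausdorff
measure of dimension equal to the affine dimension of `K`. -/
def setAverage {d : ℕ} (K : Set (E d)) : E d :=
  (μH[(Module.finrank ℝ (affineSpan ℝ K).direction : ℝ)] K).toReal⁻¹ •
    ∫ x in K, x ∂(μH[(Module.finrank ℝ (affineSpan ℝ K).direction : ℝ)])

/-- Tukey's halfspace median: the average of all deepest points. -/
def TukeyMedian {d n : ℕ} (X : Fin n → E d) : E d :=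
  setAverage (MSet X)

/-- `m` contaminating points suffice to break down the Tukey median at `X`. -/
def breaksDown {d n : ℕ} (X : Fin n → E d) (m : ℕ) : Prop :=
  ∀ C : ℝ, ∃ Y : Fin m → E d, C < ‖TukeyMedian (Fin.append X Y) - TukeyMedian X‖

/-- The finite sample (additional) breakdown point of the Tukey median at `X`. -/
def FSBP {d n : ℕ} (X : Fin n → E d) : ℝ :=
  sInf {r : ℝ | ∃ m : ℕ, 1 ≤ m ∧ breaksDown X m ∧ r = (m : ℝ) / ((n : ℝ) + (m : ℝ))}

lemma proj_apply {d : ℕ} (A : Fin (d-1) → E d) (x : E d) (j : Fin (d-1)) :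
    proj A x j = ⟪A j, x⟫ := rfl

lemma decomp {d : ℕ} (hd : 1 ≤ d) {uℓ : E d} {A : Fin (d-1) → E d} (hA : IsAu uℓ A) (v : E d) :
    v = ⟪uℓ, v⟫ • uℓ + embed A (proj A v) := by
  classical
  set B : Fin (d-1) ⊕ Unit → E d := Sum.elim A (fun _ => uℓ) with hB
  have hON : Orthonormal ℝ B := by
    rw [orthonormal_iff_ite]
    have hA' := orthonormal_iff_ite.mp hA.2.1
    rintro (j | _) (j' | _)
    · simpa [B] using hA' j j'
    · simpa [B] using hA.2.2 j
    · show ⟪uℓ, A j'⟫ = _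
      rw [real_inner_comm]; simpa using hA.2.2 j'
    · show ⟪uℓ, uℓ⟫ = _
      simp only [eq_iff_true_of_subsingleton, if_true]
      rw [real_inner_self_eq_norm_sq, hA.1]; norm_num
  have hcard : Fintype.card (Fin (d-1) ⊕ Unit) = Module.finrank ℝ (E d) := by
    simp [finrank_euclideanSpace_fin]; omega
  let b : Module.Basis _ ℝ (E d) := basisOfLinearIndependentOfCardEqFinrank hON.linearIndependent hcard
  have hbB : ⇑b = B := coe_basisOfLinearIndependentOfCardEqFinrank _ _
  let ob : OrthonormalBasis _ ℝ (E d) := b.toOrthonormalBasis (by rwa [hbB])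
  have hobB : ⇑ob = B := by rw [Module.Basis.coe_toOrthonormalBasis, hbB]
  have h := ob.sum_repr' v
  rw [Fintype.sum_sum_type] at h
  simp only [hobB, hB, Sum.elim_inl, Sum.elim_inr] at h
  have he : embed A (proj A v) = ∑ j, ⟪A j, v⟫ • A j := by
    simp [embed, proj_apply]
  calc v = ∑ x : Fin (d-1), ⟪A x, v⟫ • A x + ∑ _x : Unit, ⟪uℓ, v⟫ • uℓ := h.symm
  _ = ⟪uℓ, v⟫ • uℓ + embed A (proj A v) := by
      have hu : ∑ _x : Unit, ⟪uℓ, v⟫ • uℓ = ⟪uℓ, v⟫ • uℓ := Fintype.sum_unique _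
      rw [he, hu]; exact add_comm _ _

lemma key {d n : ℕ} (hd : 2 ≤ d) (X : Fin n → E d)
    (uℓ : E d) (A : Fin (d - 1) → E d) (hA : IsAu uℓ A)
    (x : E (d - 1)) (c : ℝ)
    (hc1 : ∀ w : E (d-1), ‖w‖ = 1 → c ≤ (sideCount (fun i => proj A (X i)) w x : ℝ))
    (hcn : c ≤ (n : ℝ))
    (δy δz : ℝ) (hlt : δz < δy)
    (hz : embed A x + δz • uℓ ∈ convexHull ℝ (Set.range X))
    (hyout : embed A x + δy • uℓ ∉ convexHull ℝ (Set.range X))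
    (hseg : openSegment ℝ (embed A x + δz • uℓ) (embed A x + δy • uℓ) ∩ convexHull ℝ (Set.range X) = ∅)
    (u : E d) (hzy : ⟪u, embed A x + δz • uℓ⟫ < ⟪u, embed A x + δy • uℓ⟫) :
    c ≤ (({i : Fin n | ⟪u, X i⟫ ≤ ⟪u, embed A x + δz • uℓ⟫} : Set (Fin n)).ncard : ℝ) := by
  classical
  set z := embed A x + δz • uℓ with hzdef
  set y := embed A x + δy • uℓ with hydef
  have hα : 0 < ⟪u, uℓ⟫ := by
    have h1 : ⟪u, y⟫ - ⟪u, z⟫ = (δy - δz) * ⟪u, uℓ⟫ := by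
      rw [hydef, hzdef, inner_add_right, inner_add_right, real_inner_smul_right,
        real_inner_smul_right]
      ring
    nlinarith [hzy, hlt]
  set T : Set (Fin n) := {i | ¬ (⟪u, X i⟫ ≤ ⟪u, z⟫)} with hTdef
  rcases T.eq_empty_or_nonempty with hT | hT
  · have huniv : {i : Fin n | ⟪u, X i⟫ ≤ ⟪u, z⟫} = Set.univ := by
      ext i
      simp only [Set.mem_setOf_eq, Set.mem_univ, iff_true]
      by_contra hni
      exact (Set.eq_empty_iff_forall_notMem.mp hT i) hni
    rw [huniv, Set.ncard_univ]
    simpa using hcn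
  · have hπlin : IsLinearMap ℝ (proj A (d := d)) := by
      constructor
      · intro a b; ext j
        show ⟪A j, a + b⟫ = ⟪A j, a⟫ + ⟪A j, b⟫
        exact inner_add_right _ _ _
      · intro r v; ext j
        show ⟪A j, r • v⟫ = r * ⟪A j, v⟫
        exact real_inner_smul_right _ _ _
    have hulin : IsLinearMap ℝ (fun v : E d => ⟪u, v⟫) :=
      ⟨fun a b => inner_add_right _ _ _, fun r a => real_inner_smul_right _ _ _⟩
    have hxT : x ∉ convexHull ℝ ((fun i => proj A (X i)) '' T) := by
      intro hmem
      have himg : (fun i => proj A (X i)) '' T = proj A '' (X '' T) := by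
        rw [Set.image_image]
      rw [himg, ← hπlin.image_convexHull] at hmem
      obtain ⟨p, hp, hpx⟩ := hmem
      have hpu : ⟪u, z⟫ < ⟪u, p⟫ := by
        have hsubset : convexHull ℝ (X '' T) ⊆ {v : E d | ⟪u, z⟫ < ⟪u, v⟫} := by
          apply convexHull_min
          · rintro _ ⟨i, hi, rfl⟩
            exact lt_of_not_ge hi
          · exact convex_halfSpace_gt hulin _
        exact hsubset hp
      have hph : p ∈ convexHull ℝ (Set.range X) :=
        convexHull_mono (by rintro _ ⟨i, _, rfl⟩; exact ⟨i, rfl⟩) hp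
      set h : ℝ := ⟪uℓ, p⟫ with hh
      have hp_eq : p = embed A x + h • uℓ := by
        have hdec := decomp (by omega) hA p
        rw [hpx] at hdec
        rw [hdec]; exact add_comm _ _
      have hinner : ⟪u, p⟫ - ⟪u, z⟫ = (h - δz) * ⟪u, uℓ⟫ := by
        rw [hp_eq, hzdef, inner_add_right, inner_add_right, real_inner_smul_right,
          real_inner_smul_right]
        ring
      have hhz : δz < h := by nlinarith
      have hyz : y - z = (δy - δz) • uℓ := by rw [hydef, hzdef]; module
      rcases lt_or_ge h δy with hhy | hhy
      · have hpseg : p ∈ openSegment ℝ z y := by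
          rw [openSegment_eq_image']
          rw [hyz]
          refine ⟨(h - δz)/(δy - δz), ⟨div_pos (by linarith) (by linarith),
            by rw [div_lt_one (by linarith)]; linarith⟩, ?_⟩
          show z + ((h - δz)/(δy - δz)) • ((δy - δz) • uℓ) = p
          rw [smul_smul, div_mul_cancel₀ _ (by linarith : δy - δz ≠ 0), hp_eq, hzdef]
          module
        have hcontra : p ∈ openSegment ℝ z y ∩ convexHull ℝ (Set.range X) := ⟨hpseg, hph⟩
        rw [hseg] at hcontra
        exact hcontra
      · have hyseg : y ∈ segment ℝ z p := by
          rw [segment_eq_image']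
          have hpz : p - z = (h - δz) • uℓ := by rw [hp_eq, hzdef]; module
          rw [hpz]
          refine ⟨(δy - δz)/(h - δz), ⟨le_of_lt (div_pos (by linarith) (by linarith)),
            by rw [div_le_one (by linarith)]; linarith⟩, ?_⟩
          show z + ((δy - δz)/(h - δz)) • ((h - δz) • uℓ) = y
          rw [smul_smul, div_mul_cancel₀ _ (by linarith : h - δz ≠ 0), hydef, hzdef]
          module
        exact hyout ((convex_convexHull ℝ _).segment_subset hz hph hyseg)
    have hCfin : ((fun i => proj A (X i)) '' T).Finite := T.toFinite.image _
    obtain ⟨f, r, hfx, hfb⟩ := geometric_hahn_banach_point_closed (convex_convexHull ℝ _)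
      (hCfin.isClosed_convexHull ℝ) hxT
    set v₀ := (InnerProductSpace.toDual ℝ (E (d-1))).symm f with hv₀def
    have hv₀ : ∀ w : E (d-1), ⟪v₀, w⟫ = f w := fun w => InnerProductSpace.toDual_symm_apply
    obtain ⟨i₁, hi₁⟩ := hT
    have hbmem : ∀ i ∈ T, proj A (X i) ∈ convexHull ℝ ((fun i => proj A (X i)) '' T) :=
      fun i hi => subset_convexHull ℝ _ ⟨i, hi, rfl⟩
    have hv₀ne : v₀ ≠ 0 := by
      intro h0
      have h1 := hfb _ (hbmem i₁ hi₁)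
      have h2 : f x = 0 := by rw [← hv₀, h0, inner_zero_left]
      have h3 : f (proj A (X i₁)) = 0 := by rw [← hv₀, h0, inner_zero_left]
      linarith
    set w := ‖v₀‖⁻¹ • v₀ with hwdef
    have hw : ‖w‖ = 1 := norm_smul_inv_norm hv₀ne
    have hsub : {i : Fin n | ⟪w, proj A (X i)⟫ ≤ ⟪w, x⟫} ⊆ {i : Fin n | ⟪u, X i⟫ ≤ ⟪u, z⟫} := by
      intro i hi
      by_contra hni
      have hb := hfb _ (hbmem i hni)
      have hx' : ⟪v₀, x⟫ < ⟪v₀, proj A (X i)⟫ := by rw [hv₀, hv₀]; linarith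
      have hwlt : ⟪w, x⟫ < ⟪w, proj A (X i)⟫ := by
        rw [hwdef, real_inner_smul_left, real_inner_smul_left]
        exact mul_lt_mul_of_pos_left hx' (inv_pos.mpr (norm_pos_iff.mpr hv₀ne))
      exact not_le.mpr hwlt hi
    calc c ≤ (sideCount (fun i => proj A (X i)) w x : ℝ) := hc1 w hw
      _ ≤ _ := Nat.cast_le.mpr (Set.ncard_le_ncard hsub (Set.toFinite _))

-- bddBelow of the depth defining set
lemma depth_set_bddBelow {d n : ℕ} (X : Fin n → E d) (x : E d) :
    BddBelow {r : ℝ | ∃ u : E d, ‖u‖ = 1 ∧ r = (sideCount X u x : ℝ) / (n : ℝ)} := by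
  refine ⟨0, ?_⟩
  rintro r ⟨u, hu, rfl⟩
  positivity

lemma unitvec (k : ℕ) (hk : 1 ≤ k) : ∃ w : E k, ‖w‖ = 1 := by
  refine ⟨EuclideanSpace.single ⟨0, hk⟩ (1:ℝ), ?_⟩
  rw [EuclideanSpace.norm_single]; norm_num


/-- **Lemma 6.** Let `u_ℓ` be a unit direction with matrix `A`, let `x` be a
maximum-depth point of the projected sample, and let `ℓ` be the line `{A x + δ u_ℓ : δ ∈ ℝ}`.
If `y ∈ ℓ` lies outside `cov(Xⁿ)`, `Yᵐ` consists of `m` repetitions of `y`, and `z ∈ ℓ` is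
the intersection of `ℓ` with the boundary of `cov(Xⁿ)` closer to `y` (the open segment from
`z` to `y` misses `cov(Xⁿ)`), then
`D(z, Xⁿ ∪ Yᵐ) ≥ min{n·λ*(X_{u_ℓ}ⁿ), m + 1} / (n + m)`. -/
theorem lemma6 {d n m : ℕ} (hd : 2 ≤ d) (X : Fin n → E d)
    (uℓ : E d) (A : Fin (d - 1) → E d) (hA : IsAu uℓ A)
    (x : E (d - 1)) (hx : x ∈ MSet (fun i => proj A (X i)))
    (y : E d) (δy : ℝ) (hyℓ : y = embed A x + δy • uℓ)
    (hyout : y ∉ convexHull ℝ (Set.range X))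
    (z : E d) (δz : ℝ) (hzℓ : z = embed A x + δz • uℓ)
    (hzb : z ∈ frontier (convexHull ℝ (Set.range X)))
    (hseg : openSegment ℝ z y ∩ convexHull ℝ (Set.range X) = ∅) :
    min ((n : ℝ) * maxDepth (fun i => proj A (X i))) ((m : ℝ) + 1) / ((n : ℝ) + (m : ℝ))
      ≤ depth (Fin.append X (fun _ : Fin m => y)) z := by
  classical
  set πX : Fin n → E (d-1) := fun i => proj A (X i) with hπX
  set lam : ℝ := maxDepth πX with hlam
  have hz : z ∈ convexHull ℝ (Set.range X) := by
    have hcl : IsClosed (convexHull ℝ (Set.range X)) :=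
      (Set.finite_range X).isClosed_convexHull ℝ
    have := frontier_subset_closure hzb
    rwa [hcl.closure_eq] at this
  have hnpos : 0 < n := by
    have hne : (Set.range X).Nonempty :=
      (convexHull_nonempty_iff (𝕜 := ℝ)).mp ⟨z, hz⟩
    obtain ⟨_, i₀, _⟩ := hne
    exact i₀.pos
  have hn : (0:ℝ) < n := by exact_mod_cast hnpos
  have hd1 : 1 ≤ d - 1 := by omega
  -- basic depth facts
  have hdx : depth πX x = lam := hx
  have hc1 : ∀ w : E (d-1), ‖w‖ = 1 → (n:ℝ) * lam ≤ (sideCount πX w x : ℝ) := by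
    intro w hw
    have hle : depth πX x ≤ (sideCount πX w x : ℝ) / (n:ℝ) :=
      csInf_le (depth_set_bddBelow πX x) ⟨w, hw, rfl⟩
    rw [hdx] at hle
    rw [mul_comm]
    exact (le_div_iff₀ hn).mp hle
  have hlam1 : lam ≤ 1 := by
    obtain ⟨w₁, hw₁⟩ := unitvec (d-1) hd1
    refine csSup_le (Set.range_nonempty _) ?_
    rintro r ⟨pt, rfl⟩
    have hle : depth πX pt ≤ (sideCount πX w₁ pt : ℝ) / (n:ℝ) :=
      csInf_le (depth_set_bddBelow πX pt) ⟨w₁, hw₁, rfl⟩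
    have hcount : (sideCount πX w₁ pt : ℝ) ≤ n := by
      have : sideCount πX w₁ pt ≤ n := by
        rw [sideCount]
        calc _ ≤ (Set.univ : Set (Fin n)).ncard := Set.ncard_le_ncard (Set.subset_univ _) Set.finite_univ
        _ = n := by rw [Set.ncard_univ]; simp
      exact_mod_cast this
    calc depth πX pt ≤ (sideCount πX w₁ pt : ℝ) / n := hle
    _ ≤ 1 := by rw [div_le_one hn]; exact hcount
  set c : ℝ := min ((n : ℝ) * lam) ((m : ℝ) + 1) with hc
  have hcn : c ≤ (n : ℝ) := le_trans (min_le_left _ _) (by nlinarith)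
  have hc1' : ∀ w : E (d-1), ‖w‖ = 1 → c ≤ (sideCount πX w x : ℝ) :=
    fun w hw => le_trans (min_le_left _ _) (hc1 w hw)
  -- main bound on counts
  set P : Fin (n + m) → E d := Fin.append X (fun _ : Fin m => y) with hP
  have hcount : ∀ u : E d, ‖u‖ = 1 → c ≤ (sideCount P u z : ℝ) := by
    intro u hu
    by_cases hcase : ⟪u, y⟫ ≤ ⟪u, z⟫
    · -- all m copies of y count, plus a minimal sample point
      obtain ⟨i₀, -, hmin⟩ := Finset.exists_min_image Finset.univ (fun i => ⟪u, X i⟫)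
        ⟨⟨0, hnpos⟩, Finset.mem_univ _⟩
      have hXz : ⟪u, X i₀⟫ ≤ ⟪u, z⟫ := by
        have hsubset : convexHull ℝ (Set.range X) ⊆ {v : E d | ⟪u, X i₀⟫ ≤ ⟪u, v⟫} := by
          apply convexHull_min
          · rintro _ ⟨i, rfl⟩
            exact hmin i (Finset.mem_univ _)
          · exact convex_halfSpace_ge
              ⟨fun a b => inner_add_right _ _ _, fun r a => real_inner_smul_right _ _ _⟩ _
        exact hsubset hz
      have hsub : insert (Fin.castAdd m i₀) (Set.range (Fin.natAdd n : Fin m → Fin (n+m)))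
          ⊆ {i : Fin (n+m) | ⟪u, P i⟫ ≤ ⟪u, z⟫} := by
        rintro j (rfl | ⟨k, rfl⟩)
        · show ⟪u, P (Fin.castAdd m i₀)⟫ ≤ ⟪u, z⟫
          rw [hP, Fin.append_left]
          exact hXz
        · show ⟪u, P (Fin.natAdd n k)⟫ ≤ ⟪u, z⟫
          rw [hP, Fin.append_right]
          exact hcase
      have hninj : Function.Injective (Fin.natAdd n : Fin m → Fin (n+m)) := by
        intro a b hab
        have h' := congrArg Fin.val hab
        simp only [Fin.coe_natAdd] at h'
        exact Fin.ext (by omega)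
      have hcard : (insert (Fin.castAdd m i₀) (Set.range (Fin.natAdd n : Fin m → Fin (n+m)))).ncard
          = m + 1 := by
        rw [Set.ncard_insert_of_notMem ?_ (Set.toFinite _)]
        · rw [← Set.image_univ, Set.ncard_image_of_injective _ hninj, Set.ncard_univ]
          simp
        · rintro ⟨k, hk⟩
          have h' := congrArg Fin.val hk
          simp only [Fin.coe_natAdd, Fin.coe_castAdd] at h'
          have := i₀.isLt
          omega
      have : (m + 1 : ℝ) ≤ (sideCount P u z : ℝ) := by
        rw [sideCount]
        have hle := Set.ncard_le_ncard hsub (Set.toFinite _)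
        rw [hcard] at hle
        exact_mod_cast hle
      exact le_trans (min_le_right _ _) this
    · push_neg at hcase
      have hδne : δz ≠ δy := by
        rintro rfl
        rw [hyℓ, ← hzℓ] at hyout
        exact hyout hz
      have hmain : c ≤ (({i : Fin n | ⟪u, X i⟫ ≤ ⟪u, z⟫} : Set (Fin n)).ncard : ℝ) := by
        rcases lt_or_gt_of_ne hδne with hlt | hlt
        · rw [hzℓ]
          exact key hd X uℓ A hA x c hc1' hcn δy δz hlt (hzℓ ▸ hz) (hyℓ ▸ hyout)
            (by rw [← hzℓ, ← hyℓ]; exact hseg) u (by rw [← hzℓ, ← hyℓ]; exact hcase)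
        · have hA' : IsAu (-uℓ) A := ⟨by rw [norm_neg]; exact hA.1, hA.2.1,
            fun j => by rw [inner_neg_right, hA.2.2 j, neg_zero]⟩
          have hz' : z = embed A x + (-δz) • (-uℓ) := by rw [hzℓ]; module
          have hy' : y = embed A x + (-δy) • (-uℓ) := by rw [hyℓ]; module
          rw [hz']
          exact key hd X (-uℓ) A hA' x c hc1' hcn (-δy) (-δz) (by linarith)
            (hz' ▸ hz) (hy' ▸ hyout)
            (by rw [← hz', ← hy']; exact hseg) u (by rw [← hz', ← hy']; exact hcase)
      -- embed into the contaminated sample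
      have hsub : (Fin.castAdd m) '' {i : Fin n | ⟪u, X i⟫ ≤ ⟪u, z⟫}
          ⊆ {i : Fin (n+m) | ⟪u, P i⟫ ≤ ⟪u, z⟫} := by
        rintro _ ⟨i, hi, rfl⟩
        show ⟪u, P (Fin.castAdd m i)⟫ ≤ ⟪u, z⟫
        rw [hP, Fin.append_left]
        exact hi
      have hcinj : Function.Injective (Fin.castAdd m : Fin n → Fin (n+m)) :=
        Fin.castAdd_injective n m
      have hle := Set.ncard_le_ncard hsub (Set.toFinite _)
      rw [Set.ncard_image_of_injective _ hcinj] at hle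
      calc c ≤ _ := hmain
      _ ≤ (sideCount P u z : ℝ) := by rw [sideCount]; exact_mod_cast hle
  -- conclude
  rw [depth]
  refine le_csInf ⟨_, uℓ, hA.1, rfl⟩ ?_
  rintro r ⟨u, hu, rfl⟩
  push_cast
  have hnm : (0:ℝ) < (n:ℝ) + (m:ℝ) := by positivity
  rw [div_le_div_iff_of_pos_right hnm]
  exact hcount u hu
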